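/- Let U ⊆ T² be a topological disc (an open set homeomorphic to the open unit disc in ℝ²) and let f : T² → T² be a homeomorphism such that f(closure(U)) ⊆ U. Then f has a fixed point. -/

import Mathlib

open Complex Finset Metric Set

noncomputable section

namespace Stmt14Aux

/-! ### Elementary complex argument lemmas -/

lemma eq_of_angle_eq {x y : ℝ} (h : (x : Real.Angle) = (y : Real.Angle))
    (hb : |x - y| < 2 * Real.pi) : x = y := by
  obtain ⟨k, hk⟩ := Real.Angle.angle_eq_iff_two_pi_dvd_sub.mp h
  have hπ := Real.pi_pos
  have hk1 : |(k : ℝ)| < 1 := by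
    rw [hk, _root_.abs_mul, _root_.abs_of_pos (by linarith : (0:ℝ) < 2 * Real.pi)] at hb
    nlinarith [abs_nonneg ((k : ℤ) : ℝ)]
  have hk0 : k = 0 := by
    by_contra hne
    have h1 : (1:ℝ) ≤ |(k:ℝ)| := by
      rw [← Int.cast_abs]
      exact_mod_cast Int.one_le_abs hne
    linarith
  rw [hk0] at hk
  push_cast at hk
  linarith

lemma re_pos_of_near_one {z : ℂ} (h : ‖z - 1‖ < 1) : 0 < z.re := by
  have h2 : ‖z - 1‖ ^ 2 < 1 := by
    nlinarith [norm_nonneg (z - 1)]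
  rw [Complex.sq_norm, Complex.normSq_apply] at h2
  simp only [Complex.sub_re, Complex.sub_im, Complex.one_re, Complex.one_im, sub_zero] at h2
  nlinarith [sq_nonneg z.im]

lemma ne_zero_of_near_one {z : ℂ} (h : ‖z - 1‖ < 1) : z ≠ 0 := by
  intro h0
  rw [h0] at h
  simp at h

lemma abs_arg_lt_of_near_one {z : ℂ} (h : ‖z - 1‖ < 1) :
    |Complex.arg z| < Real.pi / 2 :=
  Complex.abs_arg_lt_pi_div_two_iff.mpr (Or.inl (re_pos_of_near_one h))

lemma div_ne_zero_pair {a b : ℂ} (h : ‖a / b - 1‖ < 1) : a ≠ 0 ∧ b ≠ 0 := by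
  have hb : b ≠ 0 := by
    intro hb; rw [hb, div_zero] at h; simp at h
  refine ⟨?_, hb⟩
  intro ha; rw [ha, zero_div] at h; simp at h

lemma arg_mul_eq {a b : ℂ} (ha : a ≠ 0) (hb : b ≠ 0)
    (h1 : |Complex.arg a| < Real.pi / 2) (h2 : |Complex.arg b| < Real.pi / 2)
    (h3 : |Complex.arg (a * b)| < Real.pi / 2) :
    Complex.arg (a * b) = Complex.arg a + Complex.arg b := by
  have h := Complex.arg_mul_coe_angle ha hb
  have h' : ((Complex.arg (a * b) : ℝ) : Real.Angle)
      = ((Complex.arg a + Complex.arg b : ℝ) : Real.Angle) := by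
    rw [h, Real.Angle.coe_add]
  refine eq_of_angle_eq h' ?_
  have hπ := Real.pi_pos
  have e1 := abs_lt.mp h1
  have e2 := abs_lt.mp h2
  have e3 := abs_lt.mp h3
  rw [abs_lt]
  constructor <;> linarith [e1.1, e1.2, e2.1, e2.2, e3.1, e3.2]

/-! ### Sums of arguments along a chain -/

lemma sum_arg_seq (z : ℕ → ℂ) : ∀ (k : ℕ),
    (∀ j ≤ k, ‖z j / z 0 - 1‖ < 1) →
    (∀ j < k, ‖z (j + 1) / z j - 1‖ < 1) →
    ∑ j ∈ Finset.range k, Complex.arg (z (j + 1) / z j) = Complex.arg (z k / z 0) := by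
  intro k
  induction k with
  | zero =>
    intro h0 _
    have hz0 : z 0 ≠ 0 := (div_ne_zero_pair (h0 0 le_rfl)).2
    simp [div_self hz0]
  | succ k ih =>
    intro h0 h1
    have hIH := ih (fun j hj => h0 j (hj.trans (Nat.le_succ k)))
      (fun j hj => h1 j (hj.trans (Nat.lt_succ_self k)))
    rw [Finset.sum_range_succ, hIH]
    have hzk : z k ≠ 0 := (div_ne_zero_pair (h0 k (Nat.le_succ k))).1
    have hz0 : z 0 ≠ 0 := (div_ne_zero_pair (h0 0 (Nat.zero_le _))).2
    have hzk1 : z (k + 1) ≠ 0 := (div_ne_zero_pair (h0 (k + 1) le_rfl)).1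
    have hab : (z k / z 0) * (z (k + 1) / z k) = z (k + 1) / z 0 := by
      field_simp
    have ha0 : z k / z 0 ≠ 0 := div_ne_zero hzk hz0
    have hb0 : z (k + 1) / z k ≠ 0 := div_ne_zero hzk1 hzk
    have harg := arg_mul_eq ha0 hb0
      (abs_arg_lt_of_near_one (h0 k (Nat.le_succ k)))
      (abs_arg_lt_of_near_one (h1 k (Nat.lt_succ_self k)))
      (by rw [hab]; exact abs_arg_lt_of_near_one (h0 (k + 1) le_rfl))
    rw [hab] at harg
    linarith

/-! ### Winding number -/

/-- `n` is a good scale for `γ` : points at distance `≤ 1/n` have ratio near `1`. -/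
def Sgood (γ : ℝ → ℂ) (n : ℕ) : Prop :=
  0 < n ∧ ∀ s t : ℝ, |t - s| ≤ 1 / n → ‖γ t / γ s - 1‖ < 1

lemma Sgood.ne_zero {γ : ℝ → ℂ} {n : ℕ} (h : Sgood γ n) (t : ℝ) : γ t ≠ 0 :=
  (div_ne_zero_pair (h.2 t t (by rw [sub_self, abs_zero]; positivity))).1

lemma Sgood.mono {γ : ℝ → ℂ} {n m : ℕ} (h : Sgood γ n) (hnm : n ≤ m) (hm : 0 < m) :
    Sgood γ m := by
  refine ⟨hm, fun s t hst => h.2 s t (hst.trans ?_)⟩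
  have h1 : (0:ℝ) < n := by exact_mod_cast h.1
  have h2 : (n:ℝ) ≤ m := by exact_mod_cast hnm
  rw [div_le_div_iff₀ (by positivity) h1]
  nlinarith

/-- Total argument variation of `γ` at scale `n`. -/
noncomputable def Wn (γ : ℝ → ℂ) (n : ℕ) : ℝ :=
  ∑ i ∈ Finset.range n, Complex.arg (γ (((i : ℝ) + 1) / n) / γ ((i : ℝ) / n))

lemma sum_range_mul' {M : Type*} [AddCommMonoid M] (f : ℕ → M) (n k : ℕ) :
    ∑ i ∈ Finset.range (n * k), f i
      = ∑ p ∈ Finset.range n, ∑ j ∈ Finset.range k, f (p * k + j) := by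
  induction n with
  | zero => simp
  | succ n ih =>
    rw [Nat.succ_mul, Finset.sum_range_add, ih, Finset.sum_range_succ]

lemma Wn_mul {γ : ℝ → ℂ} {n : ℕ} (h : Sgood γ n) (k : ℕ) (hk : 0 < k) :
    Wn γ (n * k) = Wn γ n := by
  have hn0 : (0:ℝ) < n := by exact_mod_cast h.1
  have hk0 : (0:ℝ) < k := by exact_mod_cast hk
  unfold Wn
  rw [sum_range_mul']
  refine Finset.sum_congr rfl fun p _ => ?_
  set z : ℕ → ℂ := fun j => γ (((p : ℝ) * k + j) / ((n : ℝ) * k)) with hz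
  have hstep : ∀ j : ℕ, ∀ t : ℝ, |t - ((p : ℝ) * k + j) / ((n : ℝ) * k)| ≤ 1 / ((n:ℝ) * k) →
      True := fun _ _ _ => trivial
  have h0 : ∀ j ≤ k, ‖z j / z 0 - 1‖ < 1 := by
    intro j hj
    refine h.2 _ _ ?_
    have hjk : (j : ℝ) ≤ k := by exact_mod_cast hj
    simp only [Nat.cast_zero, add_zero]
    have hdiff : ((p:ℝ) * k + j) / ((n:ℝ) * k) - ((p:ℝ) * k) / ((n:ℝ) * k)
        = (j:ℝ) / ((n:ℝ) * k) := by
      field_simp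
      ring
    rw [hdiff, _root_.abs_of_nonneg (by positivity)]
    rw [div_le_div_iff₀ (by positivity) hn0]
    nlinarith
  have h1 : ∀ j < k, ‖z (j + 1) / z j - 1‖ < 1 := by
    intro j _
    refine h.2 _ _ ?_
    have hdiff : ((p:ℝ) * k + ↑(j + 1)) / ((n:ℝ) * k) - ((p:ℝ) * k + j) / ((n:ℝ) * k)
        = 1 / ((n:ℝ) * k) := by
      push_cast
      field_simp
      ring
    rw [hdiff, _root_.abs_of_nonneg (by positivity)]
    rw [div_le_div_iff₀ (by positivity) hn0]
    have hk1 : (1:ℝ) ≤ k := by exact_mod_cast hk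
    nlinarith
  have hsum := sum_arg_seq z k h0 h1
  have hterm : ∀ j ∈ Finset.range k,
      Complex.arg (γ ((↑(p * k + j) + 1) / ↑(n * k)) / γ ((↑(p * k + j) : ℝ) / ↑(n * k)))
        = Complex.arg (z (j + 1) / z j) := by
    intro j _
    have e1 : ((↑(p * k + j) : ℝ) + 1) / (↑(n * k) : ℝ)
        = ((p : ℝ) * k + ↑(j + 1)) / ((n : ℝ) * k) := by push_cast; ring
    have e2 : ((↑(p * k + j) : ℝ)) / (↑(n * k) : ℝ)
        = ((p : ℝ) * k + j) / ((n : ℝ) * k) := by push_cast; ring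
    rw [e1, e2]
  rw [Finset.sum_congr rfl hterm, hsum]
  have e3 : ((p : ℝ) * k + ↑k) / ((n : ℝ) * k) = ((p : ℝ) + 1) / n := by
    field_simp
  have e4 : ((p : ℝ) * k) / ((n : ℝ) * k) = (p : ℝ) / n := by
    field_simp
  simp only [hz]
  simp only [Nat.cast_zero, add_zero]
  rw [e3, e4]

lemma Wn_eq {γ : ℝ → ℂ} {n m : ℕ} (hn : Sgood γ n) (hm : Sgood γ m) :
    Wn γ n = Wn γ m := by
  have h1 := Wn_mul hn m hm.1
  have h2 := Wn_mul hm n hn.1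
  rw [Nat.mul_comm] at h2
  rw [← h1, h2]

open Classical in
/-- The (2π-scaled) winding number of a loop. -/
noncomputable def W (γ : ℝ → ℂ) : ℝ :=
  if h : ∃ n, Sgood γ n then Wn γ h.choose else 0

open Classical in
lemma W_eq {γ : ℝ → ℂ} {n : ℕ} (hn : Sgood γ n) : W γ = Wn γ n := by
  have hex : ∃ n, Sgood γ n := ⟨n, hn⟩
  rw [W, dif_pos hex]
  exact Wn_eq hex.choose_spec hn

lemma exists_good {γ : ℝ → ℂ} (hc : Continuous γ) (hp : Function.Periodic γ 1)
    (h0 : ∀ t, γ t ≠ 0) : ∃ n, Sgood γ n := by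
  obtain ⟨t₀, ht₀, hmin'⟩ := (isCompact_Icc (a := (-1:ℝ)) (b := 2)).exists_isMinOn
    ⟨0, by norm_num⟩ (continuous_norm.comp hc).continuousOn
  have hmin := isMinOn_iff.mp hmin'
  simp only [Function.comp_apply] at hmin
  set δ := ‖γ t₀‖ with hδdef
  have hδ0 : 0 < δ := norm_pos_iff.mpr (h0 t₀)
  have huc := (isCompact_Icc (a := (-1:ℝ)) (b := 2)).uniformContinuousOn_of_continuous
    hc.continuousOn
  rw [Metric.uniformContinuousOn_iff] at huc
  obtain ⟨ε, hε0, hε⟩ := huc δ hδ0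
  obtain ⟨n, hn⟩ := exists_nat_gt (max 1 (1 / ε))
  have hn1 : (1:ℝ) < n := lt_of_le_of_lt (le_max_left _ _) hn
  have hnε : 1 / ε < n := lt_of_le_of_lt (le_max_right _ _) hn
  have hn0 : (0:ℝ) < n := by linarith
  refine ⟨n, by exact_mod_cast hn0, fun s t hst => ?_⟩
  set m : ℤ := ⌊s⌋ with hm
  have hγs : γ (s - m) = γ s := by
    have := hp.sub_int_mul_eq (x := s) m
    rwa [mul_one] at this
  have hγt : γ (t - m) = γ t := by
    have := hp.sub_int_mul_eq (x := t) m
    rwa [mul_one] at this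
  have hfr1 : (0:ℝ) ≤ s - m := by
    have := Int.floor_le s; linarith
  have hfr2 : s - m < 1 := by
    have := Int.lt_floor_add_one s; linarith
  have h1n : 1 / (n:ℝ) ≤ 1 := by
    rw [div_le_one hn0]; linarith
  have hts : |t - s| ≤ 1 := hst.trans h1n
  have htm1 : -1 ≤ t - m := by
    have := abs_le.mp hts; linarith [this.1]
  have htm2 : t - m ≤ 2 := by
    have := abs_le.mp hts; linarith [this.2]
  have hsmem : s - m ∈ Icc (-1:ℝ) 2 := ⟨by linarith, by linarith⟩
  have htmem : t - m ∈ Icc (-1:ℝ) 2 := ⟨htm1, htm2⟩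
  have hdist : dist (t - (m:ℝ)) (s - m) < ε := by
    rw [Real.dist_eq]
    have : t - m - (s - m) = t - s := by ring
    rw [this]
    calc |t - s| ≤ 1 / n := hst
      _ < ε := by
        rw [div_lt_iff₀ hn0]
        rw [div_lt_iff₀ hε0] at hnε
        nlinarith
  have hclose := hε (t - m) htmem (s - m) hsmem hdist
  rw [Complex.dist_eq, hγs, hγt] at hclose
  have hδle : δ ≤ ‖γ s‖ := by
    have := hmin (s - m) hsmem
    rwa [hγs] at this
  have hγs0 : γ s ≠ 0 := h0 s
  have : γ t / γ s - 1 = (γ t - γ s) / γ s := by field_simp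
  rw [this, norm_div, div_lt_one (norm_pos_iff.mpr hγs0)]
  exact lt_of_lt_of_le hclose hδle

/-! ### Leash lemma and homotopy invariance -/

lemma W_leash {γ₁ γ₂ : ℝ → ℂ} (h1c : Continuous γ₁) (h2c : Continuous γ₂)
    (h1p : Function.Periodic γ₁ 1) (h2p : Function.Periodic γ₂ 1)
    (h1z : ∀ t, γ₁ t ≠ 0)
    (hlt : ∀ t, ‖γ₂ t - γ₁ t‖ < ‖γ₁ t‖) :
    W γ₂ = W γ₁ := by
  have h2z : ∀ t, γ₂ t ≠ 0 := by
    intro t h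
    have := hlt t
    rw [h, zero_sub, norm_neg] at this
    exact lt_irrefl _ this
  set q : ℝ → ℂ := fun t => γ₂ t / γ₁ t with hq
  have hq1 : ∀ t, ‖q t - 1‖ < 1 := by
    intro t
    have : q t - 1 = (γ₂ t - γ₁ t) / γ₁ t := by
      rw [hq]
      exact div_sub_one (h1z t)
    rw [this, norm_div, div_lt_one (norm_pos_iff.mpr (h1z t))]
    exact hlt t
  have hqz : ∀ t, q t ≠ 0 := fun t => ne_zero_of_near_one (hq1 t)
  have hqc : Continuous q := h2c.div h1c h1z
  have hqp : Function.Periodic q 1 := fun t => by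
    simp only [hq, h1p t, h2p t]
  obtain ⟨n₁, hn₁⟩ := exists_good h1c h1p h1z
  obtain ⟨n₂, hn₂⟩ := exists_good h2c h2p h2z
  obtain ⟨n₃, hn₃⟩ := exists_good hqc hqp hqz
  set n := max (max n₁ n₂) n₃ with hndef
  have hn0 : 0 < n := lt_of_lt_of_le hn₁.1 ((le_max_left _ _).trans (le_max_left _ _))
  have hg1 : Sgood γ₁ n := hn₁.mono ((le_max_left _ _).trans (le_max_left _ _)) hn0
  have hg2 : Sgood γ₂ n := hn₂.mono ((le_max_right _ _).trans (le_max_left _ _)) hn0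
  have hg3 : Sgood q n := hn₃.mono (le_max_right _ _) hn0
  rw [W_eq hg2, W_eq hg1]
  have hnr : (0:ℝ) < n := by exact_mod_cast hn0
  have key : ∀ i ∈ Finset.range n,
      Complex.arg (γ₂ (((i:ℝ) + 1) / n) / γ₂ ((i:ℝ) / n))
        = Complex.arg (γ₁ (((i:ℝ) + 1) / n) / γ₁ ((i:ℝ) / n))
          + (Complex.arg (q (((i:ℝ) + 1) / n)) - Complex.arg (q ((i:ℝ) / n))) := by
    intro i _
    set t : ℝ := (i:ℝ) / n with htdef
    set t' : ℝ := ((i:ℝ) + 1) / n with ht'def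
    have hstep : |t' - t| ≤ 1 / n := by
      have hd : t' - t = 1 / n := by
        rw [ht'def, htdef]
        field_simp
        ring
      rw [hd, _root_.abs_of_pos (by positivity)]
    have hr1 := hg1.2 t t' hstep
    have hr2 := hg2.2 t t' hstep
    have hq1t := hq1 t
    have hq1t' := hq1 t'
    have hqdef : ∀ u : ℝ, q u = γ₂ u / γ₁ u := fun u => rfl
    clear_value t t'
    have ha0 : γ₁ t' / γ₁ t ≠ 0 := div_ne_zero (h1z t') (h1z t)
    have hb0 : q t' / q t ≠ 0 := div_ne_zero (hqz t') (hqz t)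
    have hfac : γ₂ t' / γ₂ t = (γ₁ t' / γ₁ t) * (q t' / q t) := by
      rw [hqdef, hqdef]
      have e1 : γ₁ t ≠ 0 := h1z t
      have e2 : γ₁ t' ≠ 0 := h1z t'
      have e3 : γ₂ t ≠ 0 := h2z t
      field_simp
    have hangle : ((Complex.arg (γ₂ t' / γ₂ t) : ℝ) : Real.Angle)
        = ((Complex.arg (γ₁ t' / γ₁ t) + Complex.arg (q t') - Complex.arg (q t) : ℝ)
            : Real.Angle) := by
      rw [hfac, Complex.arg_mul_coe_angle ha0 hb0, Complex.arg_div_coe_angle (hqz t') (hqz t)]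
      rw [Real.Angle.coe_sub, Real.Angle.coe_add]
      abel
    have hπ := Real.pi_pos
    have b1 := abs_lt.mp (abs_arg_lt_of_near_one hr1)
    have b2 := abs_lt.mp (abs_arg_lt_of_near_one hr2)
    have b3 := abs_lt.mp (abs_arg_lt_of_near_one (hq1 t'))
    have b4 := abs_lt.mp (abs_arg_lt_of_near_one (hq1 t))
    have := eq_of_angle_eq hangle (by rw [abs_lt]; constructor <;> nlinarith)
    linarith
  unfold Wn
  rw [Finset.sum_congr rfl key, Finset.sum_add_distrib]
  have htel : ∑ i ∈ Finset.range n,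
      (Complex.arg (q (((i:ℝ) + 1) / n)) - Complex.arg (q ((i:ℝ) / n))) = 0 := by
    have := Finset.sum_range_sub (fun j : ℕ => Complex.arg (q ((j:ℝ) / n))) n
    have hc : ∀ i ∈ Finset.range n,
        (Complex.arg (q (((i:ℝ) + 1) / n)) - Complex.arg (q ((i:ℝ) / n)))
          = (fun j : ℕ => Complex.arg (q ((j:ℝ) / n))) (i + 1)
            - (fun j : ℕ => Complex.arg (q ((j:ℝ) / n))) i := by
      intro i _
      simp only []
      congr 3
      push_cast
      ring
    rw [Finset.sum_congr rfl hc, this]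
    have : ((n:ℝ)) / n = 1 := div_self (ne_of_gt hnr)
    rw [this]
    have : (0:ℕ) = (0:ℕ) := rfl
    have hq10 : q 1 = q 0 := by
      have := hqp 0
      rwa [zero_add] at this
    simp [hq10]
  rw [htel, add_zero]

lemma W_homotopy {G : ℝ → ℝ → ℂ} (hc : Continuous fun p : ℝ × ℝ => G p.1 p.2)
    (hp : ∀ s, Function.Periodic (G s) 1) (h0 : ∀ s t, G s t ≠ 0) (a b : ℝ) :
    W (G a) = W (G b) := by
  have hcs : ∀ s, Continuous (G s) := by
    intro s
    have : (G s) = (fun p : ℝ × ℝ => G p.1 p.2) ∘ (fun t => (s, t)) := rfl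
    rw [this]
    exact hc.comp (continuous_const.prodMk continuous_id)
  have hloc : IsLocallyConstant fun s => W (G s) := by
    rw [IsLocallyConstant.iff_eventually_eq]
    intro s₀
    obtain ⟨t₀, ht₀, hmin'⟩ := (isCompact_Icc (a := (0:ℝ)) (b := 1)).exists_isMinOn
      ⟨0, by norm_num⟩ (continuous_norm.comp (hcs s₀)).continuousOn
    have hmin := isMinOn_iff.mp hmin'
    simp only [Function.comp_apply] at hmin
    set δ := ‖G s₀ t₀‖ with hδdef
    have hδ0 : 0 < δ := norm_pos_iff.mpr (h0 s₀ t₀)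
    -- continuity into the sup metric
    let Gmap : C(ℝ × (Icc (0:ℝ) 1), ℂ) :=
      ⟨fun p => G p.1 p.2, hc.comp (continuous_fst.prodMk
        (continuous_subtype_val.comp continuous_snd))⟩
    let Φ : C(ℝ, C(Icc (0:ℝ) 1, ℂ)) := Gmap.curry
    obtain ⟨ε, hε0, hε⟩ := Metric.continuous_iff.mp Φ.continuous s₀ δ hδ0
    rw [Metric.eventually_nhds_iff]
    refine ⟨ε, hε0, fun s hs => ?_⟩
    refine W_leash (hcs s₀) (hcs s) (hp s₀) (hp s) (h0 s₀) ?_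
    intro t
    set m : ℤ := ⌊t⌋ with hm
    have htm : ∀ s', G s' (t - m) = G s' t := by
      intro s'
      have := (hp s').sub_int_mul_eq (x := t) m
      rwa [mul_one] at this
    have hmem : t - (m:ℝ) ∈ Icc (0:ℝ) 1 := by
      constructor
      · have := Int.floor_le t; linarith
      · have := Int.lt_floor_add_one t; linarith
    have hdd := hε s hs
    have hdapp : dist (Φ s ⟨t - m, hmem⟩) (Φ s₀ ⟨t - m, hmem⟩) ≤ dist (Φ s) (Φ s₀) :=
      ContinuousMap.dist_apply_le_dist _
    have hΦval : ∀ s', Φ s' ⟨t - m, hmem⟩ = G s' (t - m) := fun s' => rfl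
    rw [hΦval, hΦval, Complex.dist_eq] at hdapp
    have hlt : ‖G s (t - m) - G s₀ (t - m)‖ < δ := lt_of_le_of_lt hdapp hdd
    have hge : δ ≤ ‖G s₀ (t - m)‖ := hmin _ hmem
    rw [htm, htm] at hlt
    rw [htm] at hge
    exact lt_of_lt_of_le hlt hge
  exact hloc.apply_eq_of_preconnectedSpace a b

/-! ### Basic loops -/

/-- The standard unit-speed loop around the circle. -/
noncomputable def circ (t : ℝ) : ℂ := Complex.exp ((2 * Real.pi * t : ℝ) * Complex.I)

lemma circ_continuous : Continuous circ := by
  unfold circ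
  fun_prop

lemma circ_ne_zero (t : ℝ) : circ t ≠ 0 := Complex.exp_ne_zero _

lemma circ_abs (t : ℝ) : ‖circ t‖ = 1 := by
  unfold circ
  rw [Complex.norm_exp]
  simp

lemma circ_periodic : Function.Periodic circ 1 := by
  intro t
  unfold circ
  have : ((2 * Real.pi * (t + 1) : ℝ) : ℂ) * Complex.I
      = ((2 * Real.pi * t : ℝ) : ℂ) * Complex.I + 2 * Real.pi * Complex.I := by
    push_cast; ring
  rw [this, Complex.exp_add, Complex.exp_two_pi_mul_I, mul_one]

lemma circ_div (s t : ℝ) : circ t / circ s = Complex.exp (((2 * Real.pi * (t - s) : ℝ)) * Complex.I) := by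
  unfold circ
  rw [← Complex.exp_sub]
  congr 1
  push_cast
  ring

lemma W_const {c : ℂ} (hc : c ≠ 0) : W (fun _ => c) = 0 := by
  have hg : Sgood (fun _ => c) 1 := by
    refine ⟨one_pos, fun s t _ => ?_⟩
    simp [div_self hc]
  rw [W_eq hg]
  unfold Wn
  simp [div_self hc]

lemma W_circ : W circ = 2 * Real.pi := by
  have hπ := Real.pi_pos
  have hπ2 : Real.pi < 3.15 := Real.pi_lt_d2
  have hg : Sgood circ 13 := by
    refine ⟨by norm_num, fun s t hst => ?_⟩
    rw [circ_div]
    have habs : ‖((2 * Real.pi * (t - s) : ℝ)) * Complex.I‖ = 2 * Real.pi * |t - s| := by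
      rw [norm_mul, Complex.norm_I, mul_one, Complex.norm_real, Real.norm_eq_abs, _root_.abs_mul]
      rw [_root_.abs_of_pos (by linarith : (0:ℝ) < 2 * Real.pi)]
    have hsmall : ‖((2 * Real.pi * (t - s) : ℝ)) * Complex.I‖ ≤ 2 * Real.pi / 13 := by
      rw [habs]
      have : (13:ℝ) ≠ 0 := by norm_num
      calc 2 * Real.pi * |t - s| ≤ 2 * Real.pi * (1 / 13) := by
            apply mul_le_mul_of_nonneg_left (by exact_mod_cast hst) (by linarith)
        _ = 2 * Real.pi / 13 := by ring
    have h1 : ‖((2 * Real.pi * (t - s) : ℝ)) * Complex.I‖ ≤ 1 := by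
      calc _ ≤ 2 * Real.pi / 13 := hsmall
        _ ≤ 1 := by nlinarith
    calc ‖Complex.exp (((2 * Real.pi * (t - s) : ℝ)) * Complex.I) - 1‖
        ≤ 2 * ‖((2 * Real.pi * (t - s) : ℝ)) * Complex.I‖ :=
          Complex.norm_exp_sub_one_le h1
      _ ≤ 2 * (2 * Real.pi / 13) := by linarith
      _ < 1 := by nlinarith
  rw [W_eq hg]
  unfold Wn
  simp only [Nat.cast_ofNat]
  have hterm : ∀ i ∈ Finset.range 13,
      Complex.arg (circ (((i:ℝ) + 1) / 13) / circ ((i:ℝ) / 13)) = 2 * Real.pi / 13 := by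
    intro i _
    rw [circ_div]
    have : 2 * Real.pi * (((i:ℝ) + 1) / 13 - (i:ℝ) / 13) = 2 * Real.pi / 13 := by ring
    rw [this]
    have hmem : 2 * Real.pi / 13 ∈ Ioc (-Real.pi) Real.pi := by
      constructor <;> nlinarith
    rw [Complex.exp_mul_I]
    exact Complex.arg_cos_add_sin_mul_I hmem
  rw [Finset.sum_congr rfl hterm, Finset.sum_const, Finset.card_range]
  push_cast
  ring

/-! ### Brouwer fixed point theorem for the disc in ℂ -/

lemma brouwer_unit (g : ℂ → ℂ) (hg : ContinuousOn g (closedBall 0 1))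
    (hmap : Set.MapsTo g (closedBall (0:ℂ) 1) (closedBall (0:ℂ) 1)) :
    ∃ z ∈ closedBall (0:ℂ) 1, g z = z := by
  by_contra hfix
  push_neg at hfix
  have hπ := Real.pi_pos
  set clamp : ℝ → ℝ := fun s => max 0 (min 1 s) with hclampdef
  have hclamp_mem : ∀ s, clamp s ∈ Icc (0:ℝ) 1 := by
    intro s
    constructor
    · exact le_max_left _ _
    · rw [hclampdef]
      simp only [max_le_iff]
      exact ⟨by norm_num, min_le_left _ _⟩
  have hclamp_cont : Continuous clamp := continuous_const.max (continuous_const.min continuous_id)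
  have hclamp0 : clamp 0 = 0 := by norm_num [hclampdef]
  have hclamp1 : clamp 1 = 1 := by norm_num [hclampdef]
  -- the inner maps
  set m₁ : ℝ → ℝ → ℂ := fun s t => ((clamp s : ℝ) : ℂ) * circ t with hm₁
  have hm₁mem : ∀ s t, m₁ s t ∈ closedBall (0:ℂ) 1 := by
    intro s t
    rw [Metric.mem_closedBall, Complex.dist_eq, sub_zero, hm₁]
    simp only [norm_mul, Complex.norm_real, Real.norm_eq_abs, circ_abs, mul_one]
    rw [_root_.abs_of_nonneg (hclamp_mem s).1]
    exact (hclamp_mem s).2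
  have hm₁cont : Continuous fun p : ℝ × ℝ => m₁ p.1 p.2 := by
    apply Continuous.mul
    · exact Complex.continuous_ofReal.comp (hclamp_cont.comp continuous_fst)
    · exact circ_continuous.comp continuous_snd
  have hcircmem : ∀ t, circ t ∈ closedBall (0:ℂ) 1 := by
    intro t
    rw [Metric.mem_closedBall, Complex.dist_eq, sub_zero, circ_abs]
  -- Family 1 : s·circ(t) - g(s·circ(t))
  set G₁ : ℝ → ℝ → ℂ := fun s t => m₁ s t - g (m₁ s t) with hG₁
  have hG₁cont : Continuous fun p : ℝ × ℝ => G₁ p.1 p.2 := by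
    apply Continuous.sub hm₁cont
    exact hg.comp_continuous hm₁cont fun p => hm₁mem p.1 p.2
  have hG₁per : ∀ s, Function.Periodic (G₁ s) 1 := by
    intro s t
    simp only [hG₁, hm₁, circ_periodic t]
  have hG₁ne : ∀ s t, G₁ s t ≠ 0 := by
    intro s t h
    rw [hG₁, sub_eq_zero] at h
    exact hfix (m₁ s t) (hm₁mem s t) h.symm
  -- Family 2 : circ(t) - s·g(circ(t))
  set G₂ : ℝ → ℝ → ℂ := fun s t => circ t - ((clamp s : ℝ) : ℂ) * g (circ t) with hG₂
  have hG₂cont : Continuous fun p : ℝ × ℝ => G₂ p.1 p.2 := by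
    apply Continuous.sub (circ_continuous.comp continuous_snd)
    apply Continuous.mul
    · exact Complex.continuous_ofReal.comp (hclamp_cont.comp continuous_fst)
    · exact hg.comp_continuous (circ_continuous.comp continuous_snd) fun p => hcircmem p.2
  have hG₂per : ∀ s, Function.Periodic (G₂ s) 1 := by
    intro s t
    simp only [hG₂, circ_periodic t]
  have hG₂ne : ∀ s t, G₂ s t ≠ 0 := by
    intro s t h
    rw [hG₂, sub_eq_zero] at h
    have habs := congrArg (‖·‖) h
    rw [circ_abs, norm_mul, Complex.norm_real, Real.norm_eq_abs, _root_.abs_of_nonneg (hclamp_mem s).1] at habs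
    have hgle : ‖g (circ t)‖ ≤ 1 := by
      have := hmap (hcircmem t)
      rwa [Metric.mem_closedBall, Complex.dist_eq, sub_zero] at this
    have hc1 : clamp s = 1 := by
      have h1 : clamp s * ‖g (circ t)‖ ≤ clamp s :=
        mul_le_of_le_one_right (hclamp_mem s).1 hgle
      have := (hclamp_mem s).2
      linarith [habs.symm.le]
    rw [hc1, Complex.ofReal_one, one_mul] at h
    exact hfix (circ t) (hcircmem t) h.symm
  -- compute the two ends
  have hW1 := W_homotopy hG₁cont hG₁per hG₁ne 0 1
  have hW2 := W_homotopy hG₂cont hG₂per hG₂ne 0 1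
  have hg0ne : g 0 ≠ 0 := by
    intro h
    exact hfix 0 (Metric.mem_closedBall_self zero_le_one) h
  have hG₁0 : G₁ 0 = fun _ => -g 0 := by
    funext t
    simp [hG₁, hm₁, hclamp0]
  have hG₁1 : G₁ 1 = fun t => circ t - g (circ t) := by
    funext t
    simp [hG₁, hm₁, hclamp1]
  have hG₂0 : G₂ 0 = circ := by
    funext t
    simp [hG₂, hclamp0]
  have hG₂1 : G₂ 1 = fun t => circ t - g (circ t) := by
    funext t
    simp [hG₂, hclamp1]
  rw [hG₁0, hG₁1] at hW1
  rw [hG₂0, hG₂1] at hW2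
  rw [W_const (neg_ne_zero.mpr hg0ne)] at hW1
  rw [W_circ, ← hW1] at hW2
  nlinarith

lemma brouwer_ball {r : ℝ} (hr : 0 < r) (g : ℂ → ℂ)
    (hg : ContinuousOn g (closedBall 0 r))
    (hmap : Set.MapsTo g (closedBall (0:ℂ) r) (closedBall (0:ℂ) r)) :
    ∃ z ∈ closedBall (0:ℂ) r, g z = z := by
  have hrC : ((r:ℝ) : ℂ) ≠ 0 := by exact_mod_cast ne_of_gt hr
  set h : ℂ → ℂ := fun z => g (((r:ℝ) : ℂ) * z) / ((r:ℝ) : ℂ) with hh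
  have hmem : ∀ z : ℂ, z ∈ closedBall (0:ℂ) 1 → ((r:ℝ):ℂ) * z ∈ closedBall (0:ℂ) r := by
    intro z hz
    rw [Metric.mem_closedBall, Complex.dist_eq, sub_zero] at hz ⊢
    rw [norm_mul, Complex.norm_real, Real.norm_eq_abs, _root_.abs_of_pos hr]
    nlinarith [norm_nonneg z]
  have hcont : ContinuousOn h (closedBall 0 1) := by
    apply ContinuousOn.div_const
    apply hg.comp (by fun_prop)
    intro z hz
    exact hmem z hz
  have hmap' : Set.MapsTo h (closedBall (0:ℂ) 1) (closedBall (0:ℂ) 1) := by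
    intro z hz
    have := hmap (hmem z hz)
    rw [Metric.mem_closedBall, Complex.dist_eq, sub_zero] at this ⊢
    rw [hh]
    simp only [norm_div, Complex.norm_real, Real.norm_eq_abs, _root_.abs_of_pos hr]
    rw [div_le_one hr]
    linarith [this]
  obtain ⟨z, hz, hfz⟩ := brouwer_unit h hcont hmap'
  refine ⟨((r:ℝ):ℂ) * z, hmem z hz, ?_⟩
  rw [hh] at hfz
  field_simp at hfz
  exact hfz

end Stmt14Aux

/-- The two-torus `𝕋² = ℝ²/ℤ²`. -/
abbrev Torus2 : Type := UnitAddCircle × UnitAddCircle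

/-- Let `U ⊆ 𝕋²` be a topological disc (an open set homeomorphic to the
open unit disc `{x ∈ ℝ² : |x| < 1}`) and `f : 𝕋² → 𝕋²` a homeomorphism with
`f(closure U) ⊆ U`. Then `f` has a fixed point. -/
theorem stmt14 (U : Set Torus2) (hUopen : IsOpen U)
    (hdisc : Nonempty (U ≃ₜ Metric.ball (0 : EuclideanSpace ℝ (Fin 2)) 1))
    (f : Torus2 ≃ₜ Torus2) (hf : f '' closure U ⊆ U) :
    ∃ x : Torus2, f x = x := by
  classical
  obtain ⟨φ⟩ := hdisc
  -- identify the Euclidean plane with ℂ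
  set ψ : ℂ ≃ₗᵢ[ℝ] EuclideanSpace ℝ (Fin 2) := Complex.orthonormalBasisOneI.repr with hψ
  have hballs : (ψ.symm.toHomeomorph) '' (Metric.ball (0 : EuclideanSpace ℝ (Fin 2)) 1)
      = Metric.ball (0 : ℂ) 1 := by
    have h1 := ψ.symm.toIsometryEquiv.image_ball (0 : EuclideanSpace ℝ (Fin 2)) 1
    have h2 : ⇑ψ.symm.toHomeomorph = ⇑ψ.symm.toIsometryEquiv := rfl
    rw [h2, h1]
    congr 1
    simp
  set e : U ≃ₜ (Metric.ball (0:ℂ) 1) :=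
    φ.trans (((ψ.symm.toHomeomorph).image (Metric.ball (0 : EuclideanSpace ℝ (Fin 2)) 1)).trans
      (Homeomorph.setCongr hballs)) with he
  -- f restricted to U
  have hfU : ∀ u : U, f (u : Torus2) ∈ U := fun u =>
    hf ⟨(u : Torus2), subset_closure u.2, rfl⟩
  set fU : U → U := fun u => ⟨f (u : Torus2), hfU u⟩ with hfUdef
  have hfUcont : Continuous fU :=
    Continuous.subtype_mk (f.continuous.comp continuous_subtype_val) _
  -- the compact set K' in U
  set K : Set Torus2 := f '' closure U with hK
  have hKcpt : IsCompact K := (isClosed_closure.isCompact).image f.continuous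
  have hKU : K ⊆ U := hf
  set K' : Set U := Subtype.val ⁻¹' K with hK'
  have hK'cpt : IsCompact K' := by
    rw [Subtype.isCompact_iff]
    have : Subtype.val '' K' = K := by
      rw [hK', Subtype.image_preimage_coe]
      first
      | exact Set.inter_eq_left.mpr hKU
      | exact Set.inter_eq_right.mpr hKU
    rw [this]
    exact hKcpt
  set χ : U → ℂ := fun u => ((e u : ℂ)) with hχ
  have hχcont : Continuous χ := continuous_subtype_val.comp e.continuous
  set A : Set ℂ := χ '' K' with hA
  have hAcpt : IsCompact A := hK'cpt.image hχcont
  have hAball : A ⊆ Metric.ball (0:ℂ) 1 := by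
    rintro z ⟨u, _, rfl⟩
    exact (e u).2
  -- A is nonempty
  have hUne : U.Nonempty := by
    have h0 : (0 : EuclideanSpace ℝ (Fin 2)) ∈ Metric.ball (0 : EuclideanSpace ℝ (Fin 2)) 1 :=
      Metric.mem_ball_self one_pos
    exact ⟨(φ.symm ⟨0, h0⟩ : U), Subtype.coe_prop _⟩
  obtain ⟨u₀, hu₀⟩ := hUne
  have hAne : A.Nonempty := by
    refine ⟨χ ⟨f u₀, hfU ⟨u₀, hu₀⟩⟩, ⟨f u₀, hfU ⟨u₀, hu₀⟩⟩, ?_, rfl⟩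
    exact ⟨u₀, subset_closure hu₀, rfl⟩
  -- radius
  obtain ⟨z₀, hz₀A, hmax'⟩ := hAcpt.exists_isMaxOn hAne continuous_norm.continuousOn
  have hmax := isMaxOn_iff.mp hmax'
  set r : ℝ := max (‖z₀‖) (1/2) with hr
  have hr0 : 0 < r := lt_of_lt_of_le (by norm_num) (le_max_right _ _)
  have hr1 : r < 1 := by
    have hz₀ : ‖z₀‖ < 1 := by
      have := hAball hz₀A
      rwa [Metric.mem_ball, Complex.dist_eq, sub_zero] at this
    rw [hr, max_lt_iff]
    exact ⟨hz₀, by norm_num⟩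
  have hAr : A ⊆ Metric.closedBall (0:ℂ) r := by
    intro z hz
    rw [Metric.mem_closedBall, Complex.dist_eq, sub_zero]
    exact le_trans (hmax z hz) (le_max_left _ _)
  have hsub : Metric.closedBall (0:ℂ) r ⊆ Metric.ball (0:ℂ) 1 :=
    Metric.closedBall_subset_ball hr1
  -- conjugated map
  set ghat : ℂ → ℂ := fun z =>
    if h : z ∈ Metric.ball (0:ℂ) 1 then (χ (fU (e.symm ⟨z, h⟩))) else 0 with hghat
  have hghatcont : ContinuousOn ghat (Metric.ball (0:ℂ) 1) := by
    rw [continuousOn_iff_continuous_restrict]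
    have hres : (Metric.ball (0:ℂ) 1).domRestrict ghat
        = fun z : (Metric.ball (0:ℂ) 1) => χ (fU (e.symm z)) := by
      funext z
      simp only [Set.domRestrict_apply, hghat, dif_pos z.2, Subtype.coe_eta]
    rw [hres]
    exact hχcont.comp (hfUcont.comp e.symm.continuous)
  have hghatmaps : Set.MapsTo ghat (Metric.closedBall (0:ℂ) r) (Metric.closedBall (0:ℂ) r) := by
    intro z hz
    have hzb : z ∈ Metric.ball (0:ℂ) 1 := hsub hz
    have : ghat z = χ (fU (e.symm ⟨z, hzb⟩)) := by
      rw [hghat]; exact dif_pos hzb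
    rw [this]
    apply hAr
    refine ⟨fU (e.symm ⟨z, hzb⟩), ?_, rfl⟩
    exact ⟨(e.symm ⟨z, hzb⟩ : Torus2), subset_closure (e.symm ⟨z, hzb⟩).2, rfl⟩
  obtain ⟨z, hz, hfz⟩ := Stmt14Aux.brouwer_ball hr0 ghat (hghatcont.mono hsub) hghatmaps
  have hzb : z ∈ Metric.ball (0:ℂ) 1 := hsub hz
  have hgz : ghat z = χ (fU (e.symm ⟨z, hzb⟩)) := by
    rw [hghat]; exact dif_pos hzb
  rw [hgz] at hfz
  -- unfold the fixed point
  set w : U := e.symm ⟨z, hzb⟩ with hw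
  have hχw : χ (fU w) = ((⟨z, hzb⟩ : (Metric.ball (0:ℂ) 1)) : ℂ) := hfz
  have hefUw : e (fU w) = ⟨z, hzb⟩ := Subtype.ext hχw
  have hfUw : fU w = w := by
    rw [hw]
    apply e.injective
    rw [hefUw, Homeomorph.apply_symm_apply]
  refine ⟨(w : Torus2), ?_⟩
  have := congrArg (Subtype.val) hfUw
  exact this
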